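/- arXiv:1605.09012 — 3 statements merged into one kernel-verified Lean document; each statement's English description precedes it below -/
import Mathlib

section
/- Let 0 < p_min ≤ p_max and let F : [p_min, p_max]^n → [p_min, p_max]^n be monotone and strictly sub-homogeneous. Then d(F(p), F(q)) < d(p, q) for all distinct p, q ∈ [p_min, p_max]^n, where d is the Thompson metric. -/
open Set

/-- The Thompson metric on strictly positive vectors. -/
noncomputable def thompson {n : ℕ} (x y : Fin n → ℝ) : ℝ :=
  ⨆ i, |Real.log (x i) - Real.log (y i)|

/-- A monotone strictly sub-homogeneous price-bounded update strictly decreases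
Thompson distances between distinct points. -/
theorem stmt7 (n : ℕ) (pmin pmax : ℝ) (h0 : 0 < pmin) (h1 : pmin ≤ pmax)
    (F : (Fin n → ℝ) → (Fin n → ℝ))
    (hbd : ∀ p ∈ Icc (fun _ : Fin n => pmin) (fun _ => pmax),
      F p ∈ Icc (fun _ : Fin n => pmin) (fun _ => pmax))
    (hmono : ∀ p q : Fin n → ℝ, q ≤ p → F q ≤ F p)
    (hsub : ∀ p : Fin n → ℝ, (∀ i, 0 < p i) → ∀ l : ℝ, l ∈ Ioo (0:ℝ) 1 →
      ∀ i, l * F p i < F (l • p) i) :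
    ∀ p ∈ Icc (fun _ : Fin n => pmin) (fun _ => pmax),
    ∀ q ∈ Icc (fun _ : Fin n => pmin) (fun _ => pmax),
      p ≠ q → thompson (F p) (F q) < thompson p q := by
  intro p hp q hq hne
  have hppos : ∀ i, 0 < p i := fun i => lt_of_lt_of_le h0 (hp.1 i)
  have hqpos : ∀ i, 0 < q i := fun i => lt_of_lt_of_le h0 (hq.1 i)
  have hFp := hbd p hp
  have hFq := hbd q hq
  have hFppos : ∀ i, 0 < F p i := fun i => lt_of_lt_of_le h0 (hFp.1 i)
  have hFqpos : ∀ i, 0 < F q i := fun i => lt_of_lt_of_le h0 (hFq.1 i)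
  rcases Nat.eq_zero_or_pos n with hn | hn
  · subst hn
    exact absurd (funext fun i => i.elim0) hne
  haveI : Nonempty (Fin n) := ⟨⟨0, hn⟩⟩
  set d : ℝ := thompson p q with hd
  have hbdd : BddAbove (Set.range fun i => |Real.log (p i) - Real.log (q i)|) :=
    (Set.finite_range _).bddAbove
  have hd_le : ∀ i, |Real.log (p i) - Real.log (q i)| ≤ d := fun i =>
    le_ciSup hbdd i
  -- d is positive
  obtain ⟨i0, hi0⟩ : ∃ i, p i ≠ q i := Function.ne_iff.mp hne
  have hlogne : Real.log (p i0) ≠ Real.log (q i0) := fun h =>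
    hi0 (by rw [← Real.exp_log (hppos i0), ← Real.exp_log (hqpos i0), h])
  have hdpos : 0 < d :=
    lt_of_lt_of_le (abs_pos.mpr (sub_ne_zero.mpr hlogne)) (hd_le i0)
  set l : ℝ := Real.exp (-d) with hl
  have hlmem : l ∈ Ioo (0:ℝ) 1 :=
    ⟨Real.exp_pos _, Real.exp_lt_one_iff.mpr (by linarith)⟩
  have hle1 : l • p ≤ q := by
    intro i
    have h1 : Real.log (p i) - Real.log (q i) ≤ d := (le_abs_self _).trans (hd_le i)
    show l * p i ≤ q i
    calc l * p i = Real.exp (-d + Real.log (p i)) := by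
          rw [Real.exp_add, Real.exp_log (hppos i)]
      _ ≤ Real.exp (Real.log (q i)) := Real.exp_le_exp.mpr (by linarith)
      _ = q i := Real.exp_log (hqpos i)
  have hle2 : l • q ≤ p := by
    intro i
    have h1 : Real.log (q i) - Real.log (p i) ≤ d := by
      have := (abs_le.mp (hd_le i)).1; linarith
    show l * q i ≤ p i
    calc l * q i = Real.exp (-d + Real.log (q i)) := by
          rw [Real.exp_add, Real.exp_log (hqpos i)]
      _ ≤ Real.exp (Real.log (p i)) := Real.exp_le_exp.mpr (by linarith)
      _ = p i := Real.exp_log (hppos i)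
  have A : ∀ i, l * F p i < F q i := fun i =>
    (hsub p hppos l hlmem i).trans_le (hmono q (l • p) hle1 i)
  have B : ∀ i, l * F q i < F p i := fun i =>
    (hsub q hqpos l hlmem i).trans_le (hmono p (l • q) hle2 i)
  have lA : ∀ i, Real.log (F p i) - Real.log (F q i) < d := by
    intro i
    have h := Real.log_lt_log (mul_pos hlmem.1 (hFppos i)) (A i)
    rw [Real.log_mul (ne_of_gt (Real.exp_pos _)) (ne_of_gt (hFppos i)),
      Real.log_exp] at h
    linarith
  have lB : ∀ i, Real.log (F q i) - Real.log (F p i) < d := by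
    intro i
    have h := Real.log_lt_log (mul_pos hlmem.1 (hFqpos i)) (B i)
    rw [Real.log_mul (ne_of_gt (Real.exp_pos _)) (ne_of_gt (hFqpos i)),
      Real.log_exp] at h
    linarith
  obtain ⟨j, hj⟩ := Finite.exists_max (fun i => |Real.log (F p i) - Real.log (F q i)|)
  have hsup : thompson (F p) (F q) ≤ |Real.log (F p j) - Real.log (F q j)| :=
    ciSup_le hj
  exact hsup.trans_lt (abs_sub_lt_iff.mpr ⟨lA j, lB j⟩)
end

section
/- Consider the best-response map g(α, p) = α − Σ_i b_i·(c_{ij}/α)^ε/((c_{ij}/α)^ε + Σ_{k≠j}(c_{ik}/p_k)^ε) for ε > 0. The best-response price F_j(p), defined as the unique α > 0 with g(α,p) = 0, is monotone in p: if p ≥ q coordinatewise (with p, q strictly positive), then F_j(p) ≥ F_j(q). -/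
open Finset

lemma frac_mono_aux {x x' d d' : ℝ} (hx' : 0 ≤ x') (hxx : x' ≤ x)
    (hd : 0 ≤ d) (hdd : d ≤ d') : x' / (x' + d') ≤ x / (x + d) := by
  have hx : 0 ≤ x := hx'.trans hxx
  have hd' : 0 ≤ d' := hd.trans hdd
  rcases eq_or_lt_of_le (by positivity : (0:ℝ) ≤ x' + d') with h0 | h0
  · rw [← h0, div_zero]
    positivity
  · rcases eq_or_lt_of_le (by positivity : (0:ℝ) ≤ x + d) with h1 | h1
    · have hx0 : x = 0 := by nlinarith
      have hx'0 : x' = 0 := le_antisymm (by linarith) hx'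
      simp [hx0, hx'0]
    · rw [div_le_div_iff₀ h0 h1]
      nlinarith

/-- Monotonicity of the best-response price: if `p ≥ q` coordinatewise, then
the market-clearing price of good `j` against `p` is at least that against `q`. -/
theorem stmt12 (m n : ℕ) (ε : ℝ) (hε : 0 < ε)
    (b : Fin m → ℝ) (c : Fin m → Fin n → ℝ) (j : Fin n)
    (p q : Fin n → ℝ) (hb : ∀ i, 0 < b i) (hc : ∀ i k, 0 ≤ c i k)
    (hq : ∀ k, 0 < q k) (hpq : ∀ k, q k ≤ p k)
    (a β : ℝ) (ha : 0 < a) (hβ : 0 < β)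
    (hroot_p : a = ∑ i, b i * ((c i j / a) ^ ε /
      ((c i j / a) ^ ε + ∑ k ∈ univ.erase j, (c i k / p k) ^ ε)))
    (hroot_q : β = ∑ i, b i * ((c i j / β) ^ ε /
      ((c i j / β) ^ ε + ∑ k ∈ univ.erase j, (c i k / q k) ^ ε))) :
    β ≤ a := by
  by_contra h
  push_neg at h
  have key : β ≤ a := by
    rw [hroot_q, hroot_p]
    apply Finset.sum_le_sum
    intro i _
    apply mul_le_mul_of_nonneg_left _ (hb i).le
    apply frac_mono_aux
    · exact Real.rpow_nonneg (div_nonneg (hc i j) hβ.le) ε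
    · exact Real.rpow_le_rpow (div_nonneg (hc i j) hβ.le)
        (div_le_div_of_nonneg_left (hc i j) ha h.le) hε.le
    · exact Finset.sum_nonneg fun k _ =>
        Real.rpow_nonneg (div_nonneg (hc i k) ((hq k).trans_le (hpq k)).le) ε
    · apply Finset.sum_le_sum
      intro k _
      exact Real.rpow_le_rpow (div_nonneg (hc i k) ((hq k).trans_le (hpq k)).le)
        (div_le_div_of_nonneg_left (hc i k) (hq k) (hpq k)) hε.le
  exact absurd h (not_lt.mpr key)
end

section
/- With ε > 0, the best-response price F_j is strictly sub-homogeneous: for all strictly positive price vectors p and all λ ∈ (0,1), F_j(λp) > λ·F_j(p), provided F_j(p) > 0. -/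
open Finset

/-- Strict sub-homogeneity of the best-response price: scaling all other
prices by `λ ∈ (0,1)` yields a best-response price strictly greater than
`λ` times the original best-response price. -/
theorem stmt13 (m n : ℕ) (ε : ℝ) (hε : 0 < ε)
    (b : Fin m → ℝ) (c : Fin m → Fin n → ℝ) (j : Fin n)
    (p : Fin n → ℝ) (hb : ∀ i, 0 < b i) (hc : ∀ i k, 0 ≤ c i k)
    (hp : ∀ k, 0 < p k) (l : ℝ) (hl : l ∈ Set.Ioo (0:ℝ) 1)
    (a a' : ℝ) (ha : 0 < a) (ha' : 0 < a')
    (hroot : a = ∑ i, b i * ((c i j / a) ^ ε /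
      ((c i j / a) ^ ε + ∑ k ∈ univ.erase j, (c i k / p k) ^ ε)))
    (hroot' : a' = ∑ i, b i * ((c i j / a') ^ ε /
      ((c i j / a') ^ ε + ∑ k ∈ univ.erase j, (c i k / (l * p k)) ^ ε))) :
    l * a < a' := by
  obtain ⟨hl0, hl1⟩ := hl
  set D : Fin m → ℝ := fun i => ∑ k ∈ univ.erase j, (c i k / (l * p k)) ^ ε with hDdef
  set S : ℝ → ℝ := fun α => ∑ i, b i * ((c i j / α) ^ ε / ((c i j / α) ^ ε + D i))
    with hSdef
  have hlε : (0:ℝ) < l ^ ε := Real.rpow_pos_of_pos hl0 ε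
  have hroot'' : a' = S a' := hroot'
  -- key scaling identity : S (l * a) = a
  have hSla : S (l * a) = a := by
    have key : S (l * a) = ∑ i, b i * ((c i j / a) ^ ε /
        ((c i j / a) ^ ε + ∑ k ∈ univ.erase j, (c i k / p k) ^ ε)) := by
      rw [hSdef]
      apply Finset.sum_congr rfl
      intro i _
      congr 1
      have hx : (c i j / (l * a)) ^ ε = (c i j / a) ^ ε / l ^ ε := by
        rw [div_mul_eq_div_div_swap, Real.div_rpow (div_nonneg (hc i j) ha.le) hl0.le]
      have hDi : D i = (∑ k ∈ univ.erase j, (c i k / p k) ^ ε) / l ^ ε := by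
        rw [hDdef, Finset.sum_div]
        apply Finset.sum_congr rfl
        intro k _
        rw [div_mul_eq_div_div_swap,
          Real.div_rpow (div_nonneg (hc i k) (hp k).le) hl0.le]
      set x := (c i j / a) ^ ε
      set y := ∑ k ∈ univ.erase j, (c i k / p k) ^ ε
      rw [hx, hDi, ← add_div]
      rcases eq_or_ne (x + y) 0 with h | h
      · simp [h]
      · field_simp
    exact key.trans hroot.symm
  -- antitonicity of S on positive reals
  have hmono : ∀ α1 α2 : ℝ, 0 < α1 → α1 ≤ α2 → S α2 ≤ S α1 := by
    intro α1 α2 h1 h12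
    apply Finset.sum_le_sum
    intro i _
    apply mul_le_mul_of_nonneg_left _ (hb i).le
    have hx : (c i j / α2) ^ ε ≤ (c i j / α1) ^ ε := by
      apply Real.rpow_le_rpow (div_nonneg (hc i j) (by linarith)) _ hε.le
      rw [div_le_div_iff₀ (by linarith) h1]
      nlinarith [hc i j]
    set x1 := (c i j / α1) ^ ε with hx1def
    set x2 := (c i j / α2) ^ ε with hx2def
    have hx1 : 0 ≤ x1 := Real.rpow_nonneg (div_nonneg (hc i j) h1.le) ε
    have hx2 : 0 ≤ x2 := Real.rpow_nonneg (div_nonneg (hc i j) (by linarith)) ε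
    have hD0 : 0 ≤ D i := Finset.sum_nonneg fun k _ =>
      Real.rpow_nonneg (div_nonneg (hc i k) (mul_nonneg hl0.le (hp k).le)) ε
    rcases eq_or_lt_of_le (add_nonneg hx2 hD0) with h | h
    · have hx2' : x2 = 0 := by linarith
      rw [hx2']
      simp only [zero_div]
      positivity
    · rw [div_le_div_iff₀ h (lt_of_lt_of_le h (by linarith))]
      nlinarith
  by_contra hcon
  push_neg at hcon
  have h1 : S a' ≥ S (l * a) := hmono a' (l * a) ha' hcon
  rw [hSla, ← hroot''] at h1
  nlinarith [mul_lt_of_lt_one_left ha hl1]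
end
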